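/- Let Λ ⊆ ℝ be a non-empty open interval, J₁, J₂ compact intervals, and H ∈ C¹(Λ × J₁ × J₂) with nowhere vanishing partial derivatives H_x, H_y. If A ⊆ J₁ and B ⊆ J₂ are sets of second Baire category in ℝ and B has the Baire property, then there is a non-empty open interval I ⊆ Λ such that ⋂_{α ∈ I} {H(α,x,y) : x ∈ A, y ∈ B} has non-empty interior. -/

import Mathlib

open Set Filter Metric Topology

lemma aux_open_nonmeagre {U : Set ℝ} (hU : IsOpen U) (hne : U.Nonempty) : ¬ IsMeagre U := by
  intro h
  have hd : Dense Uᶜ := dense_of_mem_residual h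
  obtain ⟨z, hz1, hz2⟩ := hd.inter_open_nonempty U hU hne
  exact hz2 hz1

lemma aux_singleton_meagre (x : ℝ) : IsMeagre ({x} : Set ℝ) := by
  rw [IsMeagre]
  exact residual_of_dense_open (isOpen_compl_singleton) (dense_compl_singleton x)

lemma aux_preimage_meagre (e : ℝ ≃ₜ ℝ) {S : Set ℝ} (h : IsMeagre S) : IsMeagre (e ⁻¹' S) :=
  h.preimage_of_isOpenMap e.continuous e.isOpenMap

lemma aux_image_nonmeagre (e : ℝ ≃ₜ ℝ) {S : Set ℝ} (h : ¬ IsMeagre S) : ¬ IsMeagre (e '' S) :=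
  fun hm => h (((aux_preimage_meagre e hm).mono (subset_preimage_image e S)))

lemma aux_exists_nonmeagre_nhds {A : Set ℝ} (hA : ¬ IsMeagre A) :
    ∃ x₀ ∈ closure A, ∀ U ∈ 𝓝 x₀, ¬ IsMeagre (A ∩ U) := by
  by_contra h
  push_neg at h
  have key : ∀ x : ℝ, ∃ V : Set ℝ, IsOpen V ∧ x ∈ V ∧ IsMeagre (A ∩ V) := by
    intro x
    by_cases hx : x ∈ closure A
    · obtain ⟨U, hU, hm⟩ := h x hx
      exact ⟨interior U, isOpen_interior, mem_interior_iff_mem_nhds.2 hU,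
        hm.mono (inter_subset_inter_right _ interior_subset)⟩
    · refine ⟨(closure A)ᶜ, isClosed_closure.isOpen_compl, hx, ?_⟩
      have : A ∩ (closure A)ᶜ = ∅ := by
        apply eq_empty_of_subset_empty
        rintro z ⟨hz1, hz2⟩
        exact hz2 (subset_closure hz1)
      rw [this]; exact IsMeagre.empty
  choose V hVopen hVmem hVmeagre using key
  obtain ⟨T, hTc, hTU⟩ := TopologicalSpace.isOpen_iUnion_countable V hVopen
  apply hA
  rw [IsMeagre]
  have hUniv : ⋃ i ∈ T, V i = univ := by
    rw [hTU]; exact eq_univ_of_forall (fun x => mem_iUnion.2 ⟨x, hVmem x⟩)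
  have hmem : ∀ i ∈ T, (A ∩ V i)ᶜ ∈ residual ℝ := fun i _ => hVmeagre i
  have hbig : ⋂ i ∈ T, (A ∩ V i)ᶜ ∈ residual ℝ := (countable_bInter_mem hTc).2 hmem
  apply mem_of_superset hbig
  intro z hz
  simp only [mem_iInter, mem_compl_iff, mem_inter_iff, not_and] at hz
  intro hzA
  have : z ∈ ⋃ i ∈ T, V i := by rw [hUniv]; trivial
  obtain ⟨i, hiT, hiV⟩ := mem_iUnion₂.1 this
  exact hz i hiT hzA hiV
open Set Filter Metric Topology

lemma aux_homeo_extend {p q : ℝ} (hpq : p < q) {σ : ℝ → ℝ}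
    (hc : ContinuousOn σ (Icc p q)) (hm : StrictMonoOn σ (Icc p q)) :
    ∃ e : ℝ ≃ₜ ℝ, ∀ t ∈ Icc p q, e t = σ t := by
  set f : ℝ → ℝ := fun t => σ (max p (min q t)) + (min t p - p) + (max t q - q) with hf
  have hclamp : ∀ t, max p (min q t) ∈ Icc p q :=
    fun t => ⟨le_max_left _ _, max_le hpq.le (min_le_left _ _)⟩
  have hfIcc : ∀ t ∈ Icc p q, f t = σ t := by
    intro t ht
    have h1 : max p (min q t) = t := by
      rw [min_eq_right ht.2, max_eq_right ht.1]
    have h2 : min t p = p := min_eq_right ht.1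
    have h3 : max t q = q := max_eq_right ht.2
    simp [hf, h1, h2, h3]
  -- continuity
  have hcont : Continuous f := by
    have c1 : Continuous fun t : ℝ => σ (max p (min q t)) := by
      apply hc.comp_continuous
      · exact continuous_const.max (continuous_const.min continuous_id)
      · exact hclamp
    exact (c1.add ((continuous_id.min continuous_const).sub continuous_const)).add
      ((continuous_id.max continuous_const).sub continuous_const)
  -- strict monotonicity
  have hmono : StrictMono f := by
    intro t t' htt'
    have m1 : σ (max p (min q t)) ≤ σ (max p (min q t')) := by
      apply hm.monotoneOn (hclamp t) (hclamp t')
      exact max_le_max le_rfl (min_le_min le_rfl htt'.le)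
    have m2 : min t p ≤ min t' p := min_le_min htt'.le le_rfl
    have m3 : max t q ≤ max t' q := max_le_max htt'.le le_rfl
    rcases le_or_gt t' p with h1 | h1
    · -- min term strict
      have h5 : min t p < min t' p := by
        rw [min_eq_left (htt'.le.trans h1), min_eq_left h1]; exact htt'
      show f t < f t'
      simp only [hf]; linarith
    rcases le_or_gt q t with h2 | h2
    · have h5 : max t q < max t' q := by
        rw [max_eq_left h2, max_eq_left (h2.trans htt'.le)]; exact htt'
      show f t < f t'
      simp only [hf]; linarith
    · -- clamp strict
      have hcl : max p (min q t) < max p (min q t') := by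
        rcases le_or_gt t p with h3 | h3
        · have e1 : max p (min q t) = p := by
            rw [max_eq_left]; exact (min_le_right _ _).trans h3
          rw [e1]
          rcases le_or_gt q t' with h4 | h4
          · rw [min_eq_left h4, max_eq_right hpq.le]; exact hpq
          · rw [min_eq_right h4.le, max_eq_right h1.le]; exact h1
        · have e1 : max p (min q t) = t := by
            rw [min_eq_right h2.le, max_eq_right h3.le]
          rw [e1]
          rcases le_or_gt q t' with h4 | h4
          · rw [min_eq_left h4, max_eq_right hpq.le]; exact h2
          · rw [min_eq_right h4.le, max_eq_right (h3.le.trans htt'.le)]; exact htt'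
      have h5 : σ (max p (min q t)) < σ (max p (min q t')) :=
        hm (hclamp t) (hclamp t') hcl
      show f t < f t'
      simp only [hf]; linarith
  -- surjectivity
  have htop : Tendsto f atTop atTop := by
    apply Tendsto.congr' (f₁ := fun t => t + (-q) + σ q)
    · filter_upwards [eventually_ge_atTop q] with t ht
      have h1 : max p (min q t) = q := by rw [min_eq_left ht, max_eq_right hpq.le]
      have h2 : min t p = p := min_eq_right (hpq.le.trans ht)
      have h3 : max t q = t := max_eq_left ht
      have h4 : f t = σ q + 0 + (t - q) := by simp only [hf, h1, h2, h3]; ring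
      rw [h4]; ring
    · exact tendsto_atTop_add_const_right _ _
        (tendsto_atTop_add_const_right _ _ tendsto_id)
  have hbot : Tendsto f atBot atBot := by
    apply Tendsto.congr' (f₁ := fun t => t + (-p) + σ p)
    · filter_upwards [eventually_le_atBot p] with t ht
      have h1 : max p (min q t) = p := by
        rw [min_eq_right (ht.trans hpq.le), max_eq_left ht]
      have h2 : min t p = t := min_eq_left ht
      have h3 : max t q = q := max_eq_right (ht.trans hpq.le)
      have h4 : f t = σ p + (t - p) + 0 := by simp only [hf, h1, h2, h3]; ring
      rw [h4]; ring
    · exact tendsto_atBot_add_const_right _ _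
        (tendsto_atBot_add_const_right _ _ tendsto_id)
  have hsurj : Function.Surjective f := hcont.surjective htop hbot
  refine ⟨(StrictMono.orderIsoOfSurjective f hmono hsurj).toHomeomorph, ?_⟩
  intro t ht
  have : (StrictMono.orderIsoOfSurjective f hmono hsurj).toHomeomorph t = f t := rfl
  rw [this, hfIcc t ht]

lemma aux_homeo_extend_anti {p q : ℝ} (hpq : p < q) {σ : ℝ → ℝ}
    (hc : ContinuousOn σ (Icc p q)) (hm : StrictAntiOn σ (Icc p q)) :
    ∃ e : ℝ ≃ₜ ℝ, ∀ t ∈ Icc p q, e t = σ t := by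
  have hc' : ContinuousOn (fun t => -σ t) (Icc p q) := hc.neg
  have hm' : StrictMonoOn (fun t => -σ t) (Icc p q) := by
    intro u hu v hv huv
    simpa using hm hu hv huv
  obtain ⟨e, he⟩ := aux_homeo_extend hpq hc' hm'
  refine ⟨e.trans (Homeomorph.neg ℝ), ?_⟩
  intro t ht
  have : (e.trans (Homeomorph.neg ℝ)) t = -(e t) := rfl
  rw [this, he t ht]; simp

open Set Filter Metric Topology

lemma core_lemma (H : ℝ → ℝ → ℝ → ℝ) (α₁ α₂ x₁ x₂ y₁ y₂ α₀ x₀ y₀ δA : ℝ)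
    (hα : α₀ ∈ Ioo α₁ α₂) (hx12 : x₁ < x₂) (hx₀ : x₀ ∈ Icc x₁ x₂)
    (hy₀ : y₀ ∈ Ioo y₁ y₂) (hδA : 0 < δA)
    (hH : ContinuousOn (fun p : ℝ × ℝ × ℝ => H p.1 p.2.1 p.2.2)
      (Icc α₁ α₂ ×ˢ Icc x₁ x₂ ×ˢ Icc y₁ y₂))
    (hMy : ∀ α ∈ Icc α₁ α₂, ∀ x ∈ Icc x₁ x₂, StrictMonoOn (fun y => H α x y) (Icc y₁ y₂))
    (hMx : ∀ α ∈ Icc α₁ α₂, ∀ y ∈ Icc y₁ y₂, StrictMonoOn (fun x => H α x y) (Icc x₁ x₂))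
    (A B : Set ℝ)
    (hA0 : ∀ U ∈ 𝓝 x₀, ¬ IsMeagre (A ∩ U))
    (hAx : A ∩ Ioo (x₀ - δA) (x₀ + δA) ⊆ Icc x₁ x₂)
    (hB : IsMeagre (Ioo y₁ y₂ \ B)) :
    ∃ a' b', a' < b' ∧ Ioo a' b' ⊆ Ioo α₁ α₂ ∧ ∃ h₁ h₂, h₁ < h₂ ∧
      ∀ α ∈ Ioo a' b', ∀ h ∈ Ioo h₁ h₂, ∃ x ∈ A, ∃ y ∈ B, H α x y = h := by
  obtain ⟨hy01, hy02⟩ := hy₀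
  obtain ⟨hα01, hα02⟩ := hα
  set ε := min (y₀ - y₁) (y₂ - y₀) / 2 with hεdef
  have hε : 0 < ε := by
    have := min_le_left (y₀ - y₁) (y₂ - y₀)
    simp only [hεdef]
    have h1 : (0:ℝ) < min (y₀ - y₁) (y₂ - y₀) := lt_min (by linarith) (by linarith)
    linarith
  have h2ε₁ : 2 * ε ≤ y₀ - y₁ := by
    have := min_le_left (y₀ - y₁) (y₂ - y₀); simp only [hεdef]; linarith
  have h2ε₂ : 2 * ε ≤ y₂ - y₀ := by
    have := min_le_right (y₀ - y₁) (y₂ - y₀); simp only [hεdef]; linarith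
  have hKsub : Icc (y₀ - ε) (y₀ + ε) ⊆ Ioo y₁ y₂ := fun y hy =>
    ⟨by have := hy.1; linarith, by have := hy.2; linarith⟩
  have hKsub' : Icc (y₀ - ε) (y₀ + ε) ⊆ Icc y₁ y₂ := hKsub.trans Ioo_subset_Icc_self
  have hα₀Icc : α₀ ∈ Icc α₁ α₂ := ⟨hα01.le, hα02.le⟩
  have hy₀Icc : y₀ ∈ Icc y₁ y₂ := ⟨hy01.le, hy02.le⟩
  have hypIcc : y₀ + ε ∈ Icc y₁ y₂ := ⟨by linarith, by linarith⟩
  have hymIcc : y₀ - ε ∈ Icc y₁ y₂ := ⟨by linarith, by linarith⟩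
  set h₀ := H α₀ x₀ y₀ with hh₀
  have hplus : h₀ < H α₀ x₀ (y₀ + ε) :=
    hMy α₀ hα₀Icc x₀ hx₀ hy₀Icc hypIcc (by linarith)
  have hminus : H α₀ x₀ (y₀ - ε) < h₀ :=
    hMy α₀ hα₀Icc x₀ hx₀ hymIcc hy₀Icc (by linarith)
  set ρ := min (H α₀ x₀ (y₀ + ε) - h₀) (h₀ - H α₀ x₀ (y₀ - ε)) / 2 with hρdef
  have hρ : 0 < ρ := by
    have h1 : (0:ℝ) < min (H α₀ x₀ (y₀ + ε) - h₀) (h₀ - H α₀ x₀ (y₀ - ε)) :=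
      lt_min (by linarith) (by linarith)
    simp only [hρdef]; linarith
  have hρ1 : h₀ + ρ < H α₀ x₀ (y₀ + ε) := by
    have := min_le_left (H α₀ x₀ (y₀ + ε) - h₀) (h₀ - H α₀ x₀ (y₀ - ε))
    simp only [hρdef]; linarith
  have hρ2 : H α₀ x₀ (y₀ - ε) < h₀ - ρ := by
    have := min_le_right (H α₀ x₀ (y₀ + ε) - h₀) (h₀ - H α₀ x₀ (y₀ - ε))
    simp only [hρdef]; linarith
  -- the two-variable continuity giving the neighbourhood of (α₀,x₀)
  set S2 : Set (ℝ × ℝ) := Icc α₁ α₂ ×ˢ Icc x₁ x₂ with hS2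
  have hq₀ : (α₀, x₀) ∈ S2 := ⟨hα₀Icc, hx₀⟩
  have hFcont : ∀ c ∈ Icc y₁ y₂, ContinuousOn (fun q : ℝ × ℝ => H q.1 q.2 c) S2 := by
    intro c hc
    have : (fun q : ℝ × ℝ => H q.1 q.2 c) =
        (fun p : ℝ × ℝ × ℝ => H p.1 p.2.1 p.2.2) ∘ (fun q : ℝ × ℝ => (q.1, q.2, c)) := rfl
    rw [this]
    apply hH.comp (Continuous.continuousOn (by fun_prop))
    intro q hq
    exact ⟨hq.1, hq.2, hc⟩
  have hWmem : {q : ℝ × ℝ | H q.1 q.2 (y₀ + ε) > h₀ + ρ ∧ H q.1 q.2 (y₀ - ε) < h₀ - ρ}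
      ∈ 𝓝[S2] (α₀, x₀) := by
    have c1 := (hFcont (y₀ + ε) hypIcc) (α₀, x₀) hq₀
    have c2 := (hFcont (y₀ - ε) hymIcc) (α₀, x₀) hq₀
    have m1 : (fun q : ℝ × ℝ => H q.1 q.2 (y₀ + ε)) ⁻¹' (Ioi (h₀ + ρ)) ∈ 𝓝[S2] (α₀, x₀) :=
      c1 (Ioi_mem_nhds hρ1)
    have m2 : (fun q : ℝ × ℝ => H q.1 q.2 (y₀ - ε)) ⁻¹' (Iio (h₀ - ρ)) ∈ 𝓝[S2] (α₀, x₀) :=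
      c2 (Iio_mem_nhds hρ2)
    filter_upwards [m1, m2] with q h1 h2
    exact ⟨h1, h2⟩
  obtain ⟨r, hr, hrball⟩ := Metric.mem_nhdsWithin_iff.1 hWmem
  set r' := min r (min (α₀ - α₁) (α₂ - α₀)) with hr'def
  have hr' : 0 < r' := lt_min hr (lt_min (by linarith) (by linarith))
  have hr'r : r' ≤ r := min_le_left _ _
  have hr'1 : r' ≤ α₀ - α₁ := (min_le_right _ _).trans (min_le_left _ _)
  have hr'2 : r' ≤ α₂ - α₀ := (min_le_right _ _).trans (min_le_right _ _)
  set r'' := min (r' / 2) δA with hr''def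
  have hr'' : 0 < r'' := lt_min (by linarith) hδA
  have hr''r : r'' < r := by
    have : r'' ≤ r' / 2 := min_le_left _ _
    linarith
  have hr''δ : r'' ≤ δA := min_le_right _ _
  -- key: solvability
  have hαsub : Ioo (α₀ - r') (α₀ + r') ⊆ Icc α₁ α₂ := fun β hβ =>
    ⟨by have := hβ.1; linarith, by have := hβ.2; linarith⟩
  have hW' : ∀ α ∈ Ioo (α₀ - r') (α₀ + r'), ∀ x ∈ Icc x₁ x₂, |x - x₀| ≤ r'' →
      H α x (y₀ + ε) > h₀ + ρ ∧ H α x (y₀ - ε) < h₀ - ρ := by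
    intro α hαI x hx hxr
    have hmem2 : (α, x) ∈ ball (α₀, x₀) r ∩ S2 := by
      constructor
      · rw [Metric.mem_ball, Prod.dist_eq]
        apply max_lt
        · rw [Real.dist_eq, abs_lt]
          exact ⟨by have := hαI.1; linarith, by have := hαI.2; linarith⟩
        · rw [Real.dist_eq]
          calc |x - x₀| ≤ r'' := hxr
            _ < r := hr''r
      · exact ⟨hαsub hαI, hx⟩
    exact hrball hmem2
  have hSolv : ∀ α ∈ Ioo (α₀ - r') (α₀ + r'), ∀ x ∈ Icc x₁ x₂, |x - x₀| ≤ r'' →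
      ∀ h ∈ Icc (h₀ - ρ) (h₀ + ρ), ∃ y ∈ Icc (y₀ - ε) (y₀ + ε), H α x y = h := by
    intro α hαI x hx hxr h hh
    obtain ⟨w1, w2⟩ := hW' α hαI x hx hxr
    have hycont : ContinuousOn (fun y => H α x y) (Icc (y₀ - ε) (y₀ + ε)) := by
      have : (fun y : ℝ => H α x y) =
          (fun p : ℝ × ℝ × ℝ => H p.1 p.2.1 p.2.2) ∘ (fun y : ℝ => (α, x, y)) := rfl
      rw [this]
      apply hH.comp (Continuous.continuousOn (by fun_prop))
      intro y hy
      exact ⟨hαsub hαI, hx, hKsub' hy⟩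
    have hmem : h ∈ Icc (H α x (y₀ - ε)) (H α x (y₀ + ε)) :=
      ⟨by have := hh.1; linarith, by have := hh.2; linarith⟩
    have := intermediate_value_Icc (by linarith : y₀ - ε ≤ y₀ + ε) hycont hmem
    obtain ⟨y, hy, hyeq⟩ := this
    exact ⟨y, hy, hyeq⟩
  refine ⟨α₀ - r', α₀ + r', by linarith, fun β hβ => ⟨by have := hβ.1; linarith,
    by have := hβ.2; linarith⟩, h₀ - ρ, h₀ + ρ, by linarith, ?_⟩
  intro α hαI h hh
  set p := max x₁ (x₀ - r'') with hpdef
  set q := min x₂ (x₀ + r'') with hqdef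
  have hpq : p < q := by
    rw [hpdef, hqdef, max_lt_iff]
    constructor
    · rw [lt_min_iff]; exact ⟨hx12, by have := hx₀.1; linarith⟩
    · rw [lt_min_iff]; exact ⟨by have := hx₀.2; linarith, by linarith⟩
  have hJsub : Icc p q ⊆ Icc x₁ x₂ := Icc_subset_Icc (le_max_left _ _) (min_le_left _ _)
  have hJr : ∀ x ∈ Icc p q, |x - x₀| ≤ r'' := by
    intro x hx
    rw [abs_le]
    constructor
    · have : x₀ - r'' ≤ p := le_max_right _ _
      have := hx.1; linarith
    · have : q ≤ x₀ + r'' := min_le_right _ _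
      have := hx.2; linarith
  have hαIcc : α ∈ Icc α₁ α₂ := hαsub hαI
  have hhIcc : h ∈ Icc (h₀ - ρ) (h₀ + ρ) := Ioo_subset_Icc_self hh
  have hgex : ∀ x : ℝ, ∃ y : ℝ, x ∈ Icc p q →
      y ∈ Icc (y₀ - ε) (y₀ + ε) ∧ H α x y = h := by
    intro x
    by_cases hx : x ∈ Icc p q
    · obtain ⟨y, hy1, hy2⟩ := hSolv α hαI x (hJsub hx) (hJr x hx) h hhIcc
      exact ⟨y, fun _ => ⟨hy1, hy2⟩⟩
    · exact ⟨0, fun hc => absurd hc hx⟩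
  choose g hgspec using hgex
  have hgK : ∀ x ∈ Icc p q, g x ∈ Icc (y₀ - ε) (y₀ + ε) := fun x hx => (hgspec x hx).1
  have hgH : ∀ x ∈ Icc p q, H α x (g x) = h := fun x hx => (hgspec x hx).2
  -- g strictly antitone
  have hganti : StrictAntiOn g (Icc p q) := by
    intro u hu v hv huv
    by_contra hle
    push_neg at hle
    have h1 : H α u (g u) < H α v (g u) :=
      hMx α hαIcc (g u) (hKsub' (hgK u hu)) (hJsub hu) (hJsub hv) huv
    have h2 : H α v (g u) ≤ H α v (g v) :=
      (hMy α hαIcc v (hJsub hv)).monotoneOn (hKsub' (hgK u hu)) (hKsub' (hgK v hv)) hle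
    rw [hgH u hu, hgH v hv] at *
    linarith
  -- g continuous
  have hgcont : ContinuousOn g (Icc p q) := by
    intro xs hxs
    rw [Metric.continuousWithinAt_iff]
    intro ε' hε'
    set ε'' := min ε' ε with hε''def
    have hε''pos : 0 < ε'' := lt_min hε' hε
    have hε''ε : ε'' ≤ ε := min_le_right _ _
    set ys := g xs with hysdef
    have hysK := hgK xs hxs
    have hysIcc : ys ∈ Icc y₁ y₂ := hKsub' hysK
    have hypc : ys + ε'' ∈ Icc y₁ y₂ := by
      constructor
      · have := hysK.1; linarith
      · have := hysK.2; linarith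
    have hymc : ys - ε'' ∈ Icc y₁ y₂ := by
      constructor
      · have := hysK.1; linarith
      · have := hysK.2; linarith
    have hxsIcc : xs ∈ Icc x₁ x₂ := hJsub hxs
    have hup : H α xs ys < H α xs (ys + ε'') :=
      hMy α hαIcc xs hxsIcc hysIcc hypc (by linarith)
    have hdown : H α xs (ys - ε'') < H α xs ys :=
      hMy α hαIcc xs hxsIcc hymc hysIcc (by linarith)
    rw [hgH xs hxs] at hup hdown
    -- continuity of two slices in x within Icc x₁ x₂ at xs
    have hxcont : ∀ c ∈ Icc y₁ y₂, ContinuousWithinAt (fun x => H α x c) (Icc x₁ x₂) xs := by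
      intro c hc
      have heq : (fun x : ℝ => H α x c) =
          (fun p : ℝ × ℝ × ℝ => H p.1 p.2.1 p.2.2) ∘ (fun x : ℝ => (α, x, c)) := rfl
      rw [heq]
      exact ContinuousWithinAt.comp (hH (α, xs, c) ⟨hαIcc, hxsIcc, hc⟩)
        (Continuous.continuousWithinAt (f := fun x : ℝ => (α, x, c)) (by fun_prop))
        (fun x hx => ⟨hαIcc, hx, hc⟩)
    have m1 : (fun x => H α x (ys + ε'')) ⁻¹' (Ioi h) ∈ 𝓝[Icc x₁ x₂] xs :=
      (hxcont (ys + ε'') hypc) (Ioi_mem_nhds hup)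
    have m2 : (fun x => H α x (ys - ε'')) ⁻¹' (Iio h) ∈ 𝓝[Icc x₁ x₂] xs :=
      (hxcont (ys - ε'') hymc) (Iio_mem_nhds hdown)
    obtain ⟨δ, hδ, hδball⟩ := Metric.mem_nhdsWithin_iff.1 (inter_mem m1 m2)
    refine ⟨δ, hδ, ?_⟩
    intro x hx hxd
    have hxW : H α x (ys + ε'') > h ∧ H α x (ys - ε'') < h := by
      have := hδball ⟨Metric.mem_ball.2 hxd, hJsub hx⟩
      exact ⟨this.1, this.2⟩
    have hgxK := hgK x hx
    have hgxIcc : g x ∈ Icc y₁ y₂ := hKsub' hgxK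
    have hlt1 : g x < ys + ε'' := by
      by_contra hc
      push_neg at hc
      have : H α x (ys + ε'') ≤ H α x (g x) :=
        (hMy α hαIcc x (hJsub hx)).monotoneOn hypc hgxIcc hc
      rw [hgH x hx] at this
      linarith [hxW.1]
    have hlt2 : ys - ε'' < g x := by
      by_contra hc
      push_neg at hc
      have : H α x (g x) ≤ H α x (ys - ε'') :=
        (hMy α hαIcc x (hJsub hx)).monotoneOn hgxIcc hymc hc
      rw [hgH x hx] at this
      linarith [hxW.2]
    have hε''le : ε'' ≤ ε' := min_le_left _ _
    rw [Real.dist_eq, abs_lt]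
    constructor
    · linarith
    · linarith
  obtain ⟨e, he⟩ := aux_homeo_extend_anti hpq hgcont hganti
  set S := A ∩ Ioo (x₀ - r'') (x₀ + r'') with hSdef
  have hS : ¬ IsMeagre S := hA0 _ (Ioo_mem_nhds (by linarith) (by linarith))
  have hSsub : S ⊆ Icc p q := by
    rintro x ⟨hxA, hxI⟩
    have hxIδ : x ∈ Ioo (x₀ - δA) (x₀ + δA) :=
      ⟨by have := hxI.1; linarith, by have := hxI.2; linarith⟩
    have hx12' : x ∈ Icc x₁ x₂ := hAx ⟨hxA, hxIδ⟩
    constructor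
    · rw [hpdef]; exact max_le hx12'.1 (by have := hxI.1; linarith)
    · rw [hqdef]; exact le_min hx12'.2 (by have := hxI.2; linarith)
  have hImg : e '' S = g '' S := image_congr (fun x hx => he x (hSsub hx))
  have hne : ¬ IsMeagre (g '' S) := by
    rw [← hImg]
    exact aux_image_nonmeagre e hS
  have hgSsub : g '' S ⊆ Ioo y₁ y₂ := by
    rintro y ⟨x, hx, rfl⟩
    exact hKsub (hgK x (hSsub hx))
  have hint : (g '' S ∩ B).Nonempty := by
    by_contra hc
    rw [not_nonempty_iff_eq_empty] at hc
    apply hne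
    apply hB.mono
    intro y hy
    refine ⟨hgSsub hy, ?_⟩
    intro hyB
    exact absurd (Set.mem_inter hy hyB) (by rw [hc]; exact notMem_empty y)
  obtain ⟨y, ⟨x, hxS, rfl⟩, hyB⟩ := hint
  exact ⟨x, hxS.1, g x, hyB, hgH x (hSsub hxS)⟩

lemma wrap1 (H : ℝ → ℝ → ℝ → ℝ) (α₁ α₂ x₁ x₂ y₁ y₂ α₀ x₀ y₀ δA : ℝ)
    (hα : α₀ ∈ Ioo α₁ α₂) (hx12 : x₁ < x₂) (hx₀ : x₀ ∈ Icc x₁ x₂)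
    (hy₀ : y₀ ∈ Ioo y₁ y₂) (hδA : 0 < δA)
    (hH : ContinuousOn (fun p : ℝ × ℝ × ℝ => H p.1 p.2.1 p.2.2)
      (Icc α₁ α₂ ×ˢ Icc x₁ x₂ ×ˢ Icc y₁ y₂))
    (hMy : (∀ α ∈ Icc α₁ α₂, ∀ x ∈ Icc x₁ x₂, StrictMonoOn (fun y => H α x y) (Icc y₁ y₂)) ∨
      (∀ α ∈ Icc α₁ α₂, ∀ x ∈ Icc x₁ x₂, StrictAntiOn (fun y => H α x y) (Icc y₁ y₂)))
    (hMx : ∀ α ∈ Icc α₁ α₂, ∀ y ∈ Icc y₁ y₂, StrictMonoOn (fun x => H α x y) (Icc x₁ x₂))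
    (A B : Set ℝ)
    (hA0 : ∀ U ∈ 𝓝 x₀, ¬ IsMeagre (A ∩ U))
    (hAx : A ∩ Ioo (x₀ - δA) (x₀ + δA) ⊆ Icc x₁ x₂)
    (hB : IsMeagre (Ioo y₁ y₂ \ B)) :
    ∃ a' b', a' < b' ∧ Ioo a' b' ⊆ Ioo α₁ α₂ ∧ ∃ h₁ h₂, h₁ < h₂ ∧
      ∀ α ∈ Ioo a' b', ∀ h ∈ Ioo h₁ h₂, ∃ x ∈ A, ∃ y ∈ B, H α x y = h := by
  rcases hMy with hMy | hMy
  · exact core_lemma H α₁ α₂ x₁ x₂ y₁ y₂ α₀ x₀ y₀ δA hα hx12 hx₀ hy₀ hδA hH hMy hMx A B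
      hA0 hAx hB
  · -- conjugate y ↦ -y
    set n : ℝ ≃ₜ ℝ := Homeomorph.neg ℝ with hn
    have hnegIcc : ∀ y : ℝ, y ∈ Icc (-y₂) (-y₁) → -y ∈ Icc y₁ y₂ := by
      intro y hy; exact ⟨by have := hy.2; linarith, by have := hy.1; linarith⟩
    have key := core_lemma (fun α x y => H α x (-y)) α₁ α₂ x₁ x₂ (-y₂) (-y₁) α₀ x₀ (-y₀) δA
      hα hx12 hx₀ ⟨by have := hy₀.2; linarith, by have := hy₀.1; linarith⟩ hδA
      (by
        have : (fun p : ℝ × ℝ × ℝ => H p.1 p.2.1 (-p.2.2)) =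
            (fun p : ℝ × ℝ × ℝ => H p.1 p.2.1 p.2.2) ∘
              (fun p : ℝ × ℝ × ℝ => (p.1, p.2.1, -p.2.2)) := rfl
        rw [this]
        apply hH.comp (Continuous.continuousOn (by fun_prop))
        rintro p ⟨h1, h2, h3⟩
        exact ⟨h1, h2, hnegIcc _ h3⟩)
      (by
        intro α hα' x hx'
        intro u hu v hv huv
        have := hMy α hα' x hx' (hnegIcc v hv) (hnegIcc u hu) (by linarith)
        exact this)
      (by
        intro α hα' y hy'
        exact hMx α hα' (-y) (hnegIcc y hy'))
      A ((fun y : ℝ => -y) ⁻¹' B) hA0 hAx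
      (by
        have heq : Ioo (-y₂) (-y₁) \ ((fun y : ℝ => -y) ⁻¹' B) =
            (fun y : ℝ => -y) ⁻¹' (Ioo y₁ y₂ \ B) := by
          ext z
          simp only [mem_diff, mem_preimage, mem_Ioo]
          constructor
          · rintro ⟨⟨u1, u2⟩, u3⟩; exact ⟨⟨by linarith, by linarith⟩, u3⟩
          · rintro ⟨⟨u1, u2⟩, u3⟩; exact ⟨⟨by linarith, by linarith⟩, u3⟩
        rw [heq]
        exact aux_preimage_meagre n hB)
    obtain ⟨a', b', h1', h2', h₁, h₂, h3', h4'⟩ := key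
    refine ⟨a', b', h1', h2', h₁, h₂, h3', ?_⟩
    intro α hα' h hh'
    obtain ⟨x, hx, y, hy, heq⟩ := h4' α hα' h hh'
    exact ⟨x, hx, -y, hy, heq⟩

lemma wrap2 (H : ℝ → ℝ → ℝ → ℝ) (α₁ α₂ x₁ x₂ y₁ y₂ α₀ x₀ y₀ δA : ℝ)
    (hα : α₀ ∈ Ioo α₁ α₂) (hx12 : x₁ < x₂) (hx₀ : x₀ ∈ Icc x₁ x₂)
    (hy₀ : y₀ ∈ Ioo y₁ y₂) (hδA : 0 < δA)
    (hH : ContinuousOn (fun p : ℝ × ℝ × ℝ => H p.1 p.2.1 p.2.2)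
      (Icc α₁ α₂ ×ˢ Icc x₁ x₂ ×ˢ Icc y₁ y₂))
    (hMy : (∀ α ∈ Icc α₁ α₂, ∀ x ∈ Icc x₁ x₂, StrictMonoOn (fun y => H α x y) (Icc y₁ y₂)) ∨
      (∀ α ∈ Icc α₁ α₂, ∀ x ∈ Icc x₁ x₂, StrictAntiOn (fun y => H α x y) (Icc y₁ y₂)))
    (hMx : (∀ α ∈ Icc α₁ α₂, ∀ y ∈ Icc y₁ y₂, StrictMonoOn (fun x => H α x y) (Icc x₁ x₂)) ∨
      (∀ α ∈ Icc α₁ α₂, ∀ y ∈ Icc y₁ y₂, StrictAntiOn (fun x => H α x y) (Icc x₁ x₂)))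
    (A B : Set ℝ)
    (hA0 : ∀ U ∈ 𝓝 x₀, ¬ IsMeagre (A ∩ U))
    (hAx : A ∩ Ioo (x₀ - δA) (x₀ + δA) ⊆ Icc x₁ x₂)
    (hB : IsMeagre (Ioo y₁ y₂ \ B)) :
    ∃ a' b', a' < b' ∧ Ioo a' b' ⊆ Ioo α₁ α₂ ∧ ∃ h₁ h₂, h₁ < h₂ ∧
      ∀ α ∈ Ioo a' b', ∀ h ∈ Ioo h₁ h₂, ∃ x ∈ A, ∃ y ∈ B, H α x y = h := by
  rcases hMx with hMx | hMx
  · exact wrap1 H α₁ α₂ x₁ x₂ y₁ y₂ α₀ x₀ y₀ δA hα hx12 hx₀ hy₀ hδA hH hMy hMx A B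
      hA0 hAx hB
  · set n : ℝ ≃ₜ ℝ := Homeomorph.neg ℝ with hn
    have hnegIcc : ∀ x : ℝ, x ∈ Icc (-x₂) (-x₁) → -x ∈ Icc x₁ x₂ := by
      intro x hx; exact ⟨by have := hx.2; linarith, by have := hx.1; linarith⟩
    have key := wrap1 (fun α x y => H α (-x) y) α₁ α₂ (-x₂) (-x₁) y₁ y₂ α₀ (-x₀) y₀ δA
      hα (by linarith) ⟨by have := hx₀.2; linarith, by have := hx₀.1; linarith⟩ hy₀ hδA
      (by
        have : (fun p : ℝ × ℝ × ℝ => H p.1 (-p.2.1) p.2.2) =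
            (fun p : ℝ × ℝ × ℝ => H p.1 p.2.1 p.2.2) ∘
              (fun p : ℝ × ℝ × ℝ => (p.1, -p.2.1, p.2.2)) := rfl
        rw [this]
        apply hH.comp (Continuous.continuousOn (by fun_prop))
        rintro p ⟨h1, h2, h3⟩
        exact ⟨h1, hnegIcc _ h2, h3⟩)
      (by
        rcases hMy with hMy | hMy
        · left; intro α hα' x hx'; exact hMy α hα' (-x) (hnegIcc x hx')
        · right; intro α hα' x hx'; exact hMy α hα' (-x) (hnegIcc x hx'))
      (by
        intro α hα' y hy'
        intro u hu v hv huv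
        exact hMx α hα' y hy' (hnegIcc v hv) (hnegIcc u hu) (by linarith))
      ((fun x : ℝ => -x) ⁻¹' A) B
      (by
        intro U hU
        intro hmeag
        have hUnhds : (fun x : ℝ => -x) ⁻¹' U ∈ 𝓝 x₀ := by
          have : ContinuousAt (fun x : ℝ => -x) x₀ := continuous_neg.continuousAt
          exact this.preimage_mem_nhds (by simpa using hU)
        apply hA0 _ hUnhds
        have heq : A ∩ (fun x : ℝ => -x) ⁻¹' U =
            (fun x : ℝ => -x) ⁻¹' (((fun x : ℝ => -x) ⁻¹' A) ∩ U) := by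
          ext z
          simp only [mem_inter_iff, mem_preimage, neg_neg]
        rw [heq]
        exact aux_preimage_meagre n hmeag)
      (by
        rintro x ⟨hxA, hxI⟩
        have : -x ∈ A ∩ Ioo (x₀ - δA) (x₀ + δA) := by
          refine ⟨hxA, ?_, ?_⟩
          · have := hxI.2; linarith
          · have := hxI.1; linarith
        have := hAx this
        exact ⟨by have := this.2; linarith, by have := this.1; linarith⟩)
      hB
    obtain ⟨a', b', h1', h2', h₁, h₂, h3', h4'⟩ := key
    refine ⟨a', b', h1', h2', h₁, h₂, h3', ?_⟩
    intro α hα' h hh'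
    obtain ⟨x, hx, y, hy, heq⟩ := h4' α hα' h hh'
    exact ⟨-x, hx, y, hy, heq⟩

theorem stmt_11 (a b c₁ d₁ c₂ d₂ : ℝ) (hab : a < b) (h₁ : c₁ ≤ d₁) (h₂ : c₂ ≤ d₂)
    (H Hx Hy : ℝ → ℝ → ℝ → ℝ)
    (hC1 : ContDiffOn ℝ 1 (fun p : ℝ × ℝ × ℝ => H p.1 p.2.1 p.2.2)
      (Ioo a b ×ˢ Icc c₁ d₁ ×ˢ Icc c₂ d₂))
    (hHx : ∀ α ∈ Ioo a b, ∀ x ∈ Icc c₁ d₁, ∀ y ∈ Icc c₂ d₂,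
      HasDerivAt (fun s => H α s y) (Hx α x y) x ∧ Hx α x y ≠ 0)
    (hHy : ∀ α ∈ Ioo a b, ∀ x ∈ Icc c₁ d₁, ∀ y ∈ Icc c₂ d₂,
      HasDerivAt (fun s => H α x s) (Hy α x y) y ∧ Hy α x y ≠ 0)
    (A B : Set ℝ) (hA : A ⊆ Icc c₁ d₁) (hB : B ⊆ Icc c₂ d₂)
    (hAcat : ¬ IsMeagre A) (hBcat : ¬ IsMeagre B)
    (hBbaire : ∃ E M : Set ℝ, IsOpen E ∧ IsMeagre M ∧ B = symmDiff E M) :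
    ∃ a' b', a' < b' ∧ Ioo a' b' ⊆ Ioo a b ∧
      (interior (⋂ α ∈ Ioo a' b',
        {h : ℝ | ∃ x ∈ A, ∃ y ∈ B, H α x y = h})).Nonempty := by
  -- nondegeneracy
  have hc₁d₁ : c₁ < d₁ := by
    rcases lt_or_eq_of_le h₁ with h | h
    · exact h
    · exfalso; apply hAcat
      apply (aux_singleton_meagre c₁).mono
      intro z hz
      have := hA hz
      rw [← h] at this
      have : z = c₁ := le_antisymm this.2 this.1
      simp [this]
  have hc₂d₂ : c₂ < d₂ := by
    rcases lt_or_eq_of_le h₂ with h | h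
    · exact h
    · exfalso; apply hBcat
      apply (aux_singleton_meagre c₂).mono
      intro z hz
      have := hB hz
      rw [← h] at this
      have : z = c₂ := le_antisymm this.2 this.1
      simp [this]
  have hCont : ContinuousOn (fun p : ℝ × ℝ × ℝ => H p.1 p.2.1 p.2.2)
      (Ioo a b ×ˢ Icc c₁ d₁ ×ˢ Icc c₂ d₂) := hC1.continuousOn
  -- the point x₀
  obtain ⟨x₀, hx₀cl, hx₀⟩ := aux_exists_nonmeagre_nhds hAcat
  have hx₀Icc : x₀ ∈ Icc c₁ d₁ := closure_minimal hA isClosed_Icc hx₀cl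
  -- the interval for B
  obtain ⟨E, M, hEopen, hMmeagre, hBEM⟩ := hBbaire
  have hEne : E.Nonempty := by
    rcases eq_empty_or_nonempty E with h | h
    · exfalso; apply hBcat
      rw [hBEM, h]
      have : symmDiff (∅ : Set ℝ) M = M := by
        rw [symmDiff_def]; simp
      rw [this]; exact hMmeagre
    · exact h
  obtain ⟨t, htE⟩ := hEne
  obtain ⟨s, hs, hballE⟩ := Metric.isOpen_iff.1 hEopen t htE
  rw [Real.ball_eq_Ioo] at hballE
  have hEB : E \ B ⊆ M := by
    rintro z ⟨hzE, hzB⟩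
    by_contra hzM
    apply hzB
    rw [hBEM, Set.mem_symmDiff]
    exact Or.inl ⟨hzE, hzM⟩
  have hIooB : IsMeagre (Ioo (t - s) (t + s) \ B) :=
    hMmeagre.mono (fun z hz => hEB ⟨hballE hz.1, hz.2⟩)
  have hIooIcc : Ioo (t - s) (t + s) ⊆ Icc c₂ d₂ := by
    by_contra hc
    rw [not_subset] at hc
    obtain ⟨z, hz1, hz2⟩ := hc
    have hWopen : IsOpen (Ioo (t - s) (t + s) \ Icc c₂ d₂) := isOpen_Ioo.sdiff isClosed_Icc
    have hWsub : Ioo (t - s) (t + s) \ Icc c₂ d₂ ⊆ Ioo (t - s) (t + s) \ B :=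
      fun w hw => ⟨hw.1, fun hwB => hw.2 (hB hwB)⟩
    exact aux_open_nonmeagre hWopen ⟨z, hz1, hz2⟩ (hIooB.mono hWsub)
  have hy₀Icc : t ∈ Icc c₂ d₂ := hIooIcc ⟨by linarith, by linarith⟩
  set α₀ := (a + b) / 2 with hα₀def
  have hα₀ : α₀ ∈ Ioo a b := ⟨by simp only [hα₀def]; linarith, by simp only [hα₀def]; linarith⟩
  -- pointwise monotonicity dichotomies
  have hDy : ∀ α ∈ Ioo a b, ∀ x ∈ Icc c₁ d₁,
      StrictMonoOn (fun y => H α x y) (Icc c₂ d₂) ∨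
      StrictAntiOn (fun y => H α x y) (Icc c₂ d₂) := by
    intro α hα x hx
    have hcont : ContinuousOn (fun y => H α x y) (Icc c₂ d₂) := fun y hy =>
      ((hHy α hα x hx y hy).1.continuousAt).continuousWithinAt
    have hinj : InjOn (fun y => H α x y) (Icc c₂ d₂) := by
      intro u hu v hv heq
      by_contra hne
      rcases lt_or_gt_of_ne hne with hlt | hlt
      all_goals {
        first
        | (obtain ⟨w, hw, hw0⟩ := exists_hasDerivAt_eq_zero hlt
            (hcont.mono (Icc_subset_Icc hu.1 hv.2)) heq
            (fun z hz => (hHy α hα x hx z ⟨hu.1.trans hz.1.le, hz.2.le.trans hv.2⟩).1)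
           exact (hHy α hα x hx w ⟨hu.1.trans hw.1.le, hw.2.le.trans hv.2⟩).2 hw0)
        | (obtain ⟨w, hw, hw0⟩ := exists_hasDerivAt_eq_zero hlt
            (hcont.mono (Icc_subset_Icc hv.1 hu.2)) heq.symm
            (fun z hz => (hHy α hα x hx z ⟨hv.1.trans hz.1.le, hz.2.le.trans hu.2⟩).1)
           exact (hHy α hα x hx w ⟨hv.1.trans hw.1.le, hw.2.le.trans hu.2⟩).2 hw0) }
    exact hcont.strictMonoOn_of_injOn_Icc' h₂ hinj
  have hDx : ∀ α ∈ Ioo a b, ∀ y ∈ Icc c₂ d₂,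
      StrictMonoOn (fun x => H α x y) (Icc c₁ d₁) ∨
      StrictAntiOn (fun x => H α x y) (Icc c₁ d₁) := by
    intro α hα y hy
    have hcont : ContinuousOn (fun x => H α x y) (Icc c₁ d₁) := fun x hx =>
      ((hHx α hα x hx y hy).1.continuousAt).continuousWithinAt
    have hinj : InjOn (fun x => H α x y) (Icc c₁ d₁) := by
      intro u hu v hv heq
      by_contra hne
      rcases lt_or_gt_of_ne hne with hlt | hlt
      all_goals {
        first
        | (obtain ⟨w, hw, hw0⟩ := exists_hasDerivAt_eq_zero hlt
            (hcont.mono (Icc_subset_Icc hu.1 hv.2)) heq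
            (fun z hz => (hHx α hα z ⟨hu.1.trans hz.1.le, hz.2.le.trans hv.2⟩ y hy).1)
           exact (hHx α hα w ⟨hu.1.trans hw.1.le, hw.2.le.trans hv.2⟩ y hy).2 hw0)
        | (obtain ⟨w, hw, hw0⟩ := exists_hasDerivAt_eq_zero hlt
            (hcont.mono (Icc_subset_Icc hv.1 hu.2)) heq.symm
            (fun z hz => (hHx α hα z ⟨hv.1.trans hz.1.le, hz.2.le.trans hu.2⟩ y hy).1)
           exact (hHx α hα w ⟨hv.1.trans hw.1.le, hw.2.le.trans hu.2⟩ y hy).2 hw0) }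
    exact hcont.strictMonoOn_of_injOn_Icc' h₁ hinj
  -- sign functions
  set ψ : ℝ × ℝ → ℝ := fun q => H q.1 q.2 d₂ - H q.1 q.2 c₂ with hψdef
  set φ : ℝ × ℝ → ℝ := fun q => H q.1 d₁ q.2 - H q.1 c₁ q.2 with hφdef
  have hc₂mem : c₂ ∈ Icc c₂ d₂ := ⟨le_refl _, h₂⟩
  have hd₂mem : d₂ ∈ Icc c₂ d₂ := ⟨h₂, le_refl _⟩
  have hc₁mem : c₁ ∈ Icc c₁ d₁ := ⟨le_refl _, h₁⟩
  have hd₁mem : d₁ ∈ Icc c₁ d₁ := ⟨h₁, le_refl _⟩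
  have hsliceY : ∀ c ∈ Icc c₂ d₂, ContinuousOn (fun q : ℝ × ℝ => H q.1 q.2 c)
      (Ioo a b ×ˢ Icc c₁ d₁) := by
    intro c hc
    have h : (fun q : ℝ × ℝ => H q.1 q.2 c) =
        (fun p : ℝ × ℝ × ℝ => H p.1 p.2.1 p.2.2) ∘ (fun q : ℝ × ℝ => (q.1, q.2, c)) := rfl
    rw [h]
    apply hCont.comp (Continuous.continuousOn (by fun_prop))
    rintro q ⟨hq1, hq2⟩
    exact ⟨hq1, hq2, hc⟩
  have hsliceX : ∀ c ∈ Icc c₁ d₁, ContinuousOn (fun q : ℝ × ℝ => H q.1 c q.2)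
      (Ioo a b ×ˢ Icc c₂ d₂) := by
    intro c hc
    have h : (fun q : ℝ × ℝ => H q.1 c q.2) =
        (fun p : ℝ × ℝ × ℝ => H p.1 p.2.1 p.2.2) ∘ (fun q : ℝ × ℝ => (q.1, c, q.2)) := rfl
    rw [h]
    apply hCont.comp (Continuous.continuousOn (by fun_prop))
    rintro q ⟨hq1, hq2⟩
    exact ⟨hq1, hc, hq2⟩
  have hψcont : ContinuousOn ψ (Ioo a b ×ˢ Icc c₁ d₁) :=
    (hsliceY d₂ hd₂mem).sub (hsliceY c₂ hc₂mem)
  have hφcont : ContinuousOn φ (Ioo a b ×ˢ Icc c₂ d₂) :=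
    (hsliceX d₁ hd₁mem).sub (hsliceX c₁ hc₁mem)
  -- key: positive ψ on a set forces the monotone branch
  have hψmono : ∀ α ∈ Ioo a b, ∀ x ∈ Icc c₁ d₁, 0 < ψ (α, x) →
      StrictMonoOn (fun y => H α x y) (Icc c₂ d₂) := by
    intro α hα x hx hpos
    rcases hDy α hα x hx with h | h
    · exact h
    · exfalso
      have := h hc₂mem hd₂mem hc₂d₂
      simp only [hψdef] at hpos
      simp only at this
      linarith
  have hψanti : ∀ α ∈ Ioo a b, ∀ x ∈ Icc c₁ d₁, ψ (α, x) < 0 →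
      StrictAntiOn (fun y => H α x y) (Icc c₂ d₂) := by
    intro α hα x hx hneg
    rcases hDy α hα x hx with h | h
    · exfalso
      have := h hc₂mem hd₂mem hc₂d₂
      simp only [hψdef] at hneg
      simp only at this
      linarith
    · exact h
  have hφmono : ∀ α ∈ Ioo a b, ∀ y ∈ Icc c₂ d₂, 0 < φ (α, y) →
      StrictMonoOn (fun x => H α x y) (Icc c₁ d₁) := by
    intro α hα y hy hpos
    rcases hDx α hα y hy with h | h
    · exact h
    · exfalso
      have := h hc₁mem hd₁mem hc₁d₁
      simp only [hφdef] at hpos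
      simp only at this
      linarith
  have hφanti : ∀ α ∈ Ioo a b, ∀ y ∈ Icc c₂ d₂, φ (α, y) < 0 →
      StrictAntiOn (fun x => H α x y) (Icc c₁ d₁) := by
    intro α hα y hy hneg
    rcases hDx α hα y hy with h | h
    · exfalso
      have := h hc₁mem hd₁mem hc₁d₁
      simp only [hφdef] at hneg
      simp only at this
      linarith
    · exact h
  -- ψ and φ never vanish at relevant base points
  have hψne : ψ (α₀, x₀) ≠ 0 := by
    rcases hDy α₀ hα₀ x₀ hx₀Icc with h | h
    · have := h hc₂mem hd₂mem hc₂d₂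
      simp only [hψdef]; simp only at this; intro hc; linarith
    · have := h hc₂mem hd₂mem hc₂d₂
      simp only [hψdef]; simp only at this; intro hc; linarith
  have hφne : φ (α₀, t) ≠ 0 := by
    rcases hDx α₀ hα₀ t hy₀Icc with h | h
    · have := h hc₁mem hd₁mem hc₁d₁
      simp only [hφdef]; simp only at this; intro hc; linarith
    · have := h hc₁mem hd₁mem hc₁d₁
      simp only [hφdef]; simp only at this; intro hc; linarith
  -- neighbourhoods where the sign is constant
  have hψnbhd : ∃ τ₁ > 0, ∀ q ∈ ball ((α₀, x₀) : ℝ × ℝ) τ₁ ∩ (Ioo a b ×ˢ Icc c₁ d₁),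
      (0 < ψ (α₀, x₀) → 0 < ψ q) ∧ (ψ (α₀, x₀) < 0 → ψ q < 0) := by
    rcases lt_or_gt_of_ne hψne with hneg | hpos
    · have hmem : ψ ⁻¹' (Iio 0) ∈ 𝓝[Ioo a b ×ˢ Icc c₁ d₁] (α₀, x₀) :=
        (hψcont (α₀, x₀) ⟨hα₀, hx₀Icc⟩) (Iio_mem_nhds hneg)
      obtain ⟨τ, hτ, hτsub⟩ := Metric.mem_nhdsWithin_iff.1 hmem
      exact ⟨τ, hτ, fun q hq => ⟨fun hc => absurd hneg (by linarith), fun _ => hτsub hq⟩⟩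
    · have hmem : ψ ⁻¹' (Ioi 0) ∈ 𝓝[Ioo a b ×ˢ Icc c₁ d₁] (α₀, x₀) :=
        (hψcont (α₀, x₀) ⟨hα₀, hx₀Icc⟩) (Ioi_mem_nhds hpos)
      obtain ⟨τ, hτ, hτsub⟩ := Metric.mem_nhdsWithin_iff.1 hmem
      exact ⟨τ, hτ, fun q hq => ⟨fun _ => hτsub hq, fun hc => absurd hpos (by linarith)⟩⟩
  have hφnbhd : ∃ τ₂ > 0, ∀ q ∈ ball ((α₀, t) : ℝ × ℝ) τ₂ ∩ (Ioo a b ×ˢ Icc c₂ d₂),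
      (0 < φ (α₀, t) → 0 < φ q) ∧ (φ (α₀, t) < 0 → φ q < 0) := by
    rcases lt_or_gt_of_ne hφne with hneg | hpos
    · have hmem : φ ⁻¹' (Iio 0) ∈ 𝓝[Ioo a b ×ˢ Icc c₂ d₂] (α₀, t) :=
        (hφcont (α₀, t) ⟨hα₀, hy₀Icc⟩) (Iio_mem_nhds hneg)
      obtain ⟨τ, hτ, hτsub⟩ := Metric.mem_nhdsWithin_iff.1 hmem
      exact ⟨τ, hτ, fun q hq => ⟨fun hc => absurd hneg (by linarith), fun _ => hτsub hq⟩⟩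
    · have hmem : φ ⁻¹' (Ioi 0) ∈ 𝓝[Ioo a b ×ˢ Icc c₂ d₂] (α₀, t) :=
        (hφcont (α₀, t) ⟨hα₀, hy₀Icc⟩) (Ioi_mem_nhds hpos)
      obtain ⟨τ, hτ, hτsub⟩ := Metric.mem_nhdsWithin_iff.1 hmem
      exact ⟨τ, hτ, fun q hq => ⟨fun _ => hτsub hq, fun hc => absurd hpos (by linarith)⟩⟩
  obtain ⟨τ₁, hτ₁, hψsign⟩ := hψnbhd
  obtain ⟨τ₂, hτ₂, hφsign⟩ := hφnbhd
  -- the box size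
  set τ := min (min (τ₁ / 2) (τ₂ / 2)) (min (min ((α₀ - a) / 2) ((b - α₀) / 2)) (s / 4))
    with hτdef
  have hα₀a : a < α₀ := hα₀.1
  have hα₀b : α₀ < b := hα₀.2
  have hτpos : 0 < τ := by
    apply lt_min (lt_min (by linarith) (by linarith))
    apply lt_min (lt_min (by linarith) (by linarith)) (by linarith)
  have hττ₁ : τ < τ₁ := by
    have : τ ≤ τ₁ / 2 := (min_le_left _ _).trans (min_le_left _ _)
    linarith
  have hττ₂ : τ < τ₂ := by
    have : τ ≤ τ₂ / 2 := (min_le_left _ _).trans (min_le_right _ _)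
    linarith
  have hτa : τ ≤ (α₀ - a) / 2 := (min_le_right _ _).trans
    ((min_le_left _ _).trans (min_le_left _ _))
  have hτb : τ ≤ (b - α₀) / 2 := (min_le_right _ _).trans
    ((min_le_left _ _).trans (min_le_right _ _))
  have hτs : τ ≤ s / 4 := (min_le_right _ _).trans (min_le_right _ _)
  -- the box
  set Jα₁ := α₀ - τ with hJα₁
  set Jα₂ := α₀ + τ with hJα₂
  set Jx₁ := max c₁ (x₀ - τ) with hJx₁
  set Jx₂ := min d₁ (x₀ + τ) with hJx₂
  set Jy₁ := max (t - s / 2) (t - τ) with hJy₁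
  set Jy₂ := min (t + s / 2) (t + τ) with hJy₂
  have hJαsub : Icc Jα₁ Jα₂ ⊆ Ioo a b := fun β hβ =>
    ⟨by have := hβ.1; simp only [hJα₁] at this; linarith,
     by have := hβ.2; simp only [hJα₂] at this; linarith⟩
  have hJxsub : Icc Jx₁ Jx₂ ⊆ Icc c₁ d₁ :=
    Icc_subset_Icc (le_max_left _ _) (min_le_left _ _)
  have hJx12 : Jx₁ < Jx₂ := by
    rw [hJx₁, hJx₂, max_lt_iff]
    constructor
    · rw [lt_min_iff]; exact ⟨hc₁d₁, by have := hx₀Icc.1; linarith⟩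
    · rw [lt_min_iff]; exact ⟨by have := hx₀Icc.2; linarith, by linarith⟩
  have hJx₀ : x₀ ∈ Icc Jx₁ Jx₂ := by
    constructor
    · rw [hJx₁]; exact max_le hx₀Icc.1 (by linarith)
    · rw [hJx₂]; exact le_min hx₀Icc.2 (by linarith)
  have hJxτ : ∀ x ∈ Icc Jx₁ Jx₂, |x - x₀| ≤ τ := by
    intro x hx
    rw [abs_le]
    constructor
    · have : x₀ - τ ≤ Jx₁ := le_max_right _ _
      have := hx.1; linarith
    · have : Jx₂ ≤ x₀ + τ := min_le_right _ _
      have := hx.2; linarith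
  have hJysub : Icc Jy₁ Jy₂ ⊆ Icc c₂ d₂ := by
    intro y hy
    apply hIooIcc
    constructor
    · have h1 : t - s / 2 ≤ Jy₁ := le_max_left _ _
      have := hy.1; linarith
    · have h1 : Jy₂ ≤ t + s / 2 := min_le_left _ _
      have := hy.2; linarith
  have hJy₀ : t ∈ Ioo Jy₁ Jy₂ := by
    constructor
    · rw [hJy₁, max_lt_iff]; exact ⟨by linarith, by linarith⟩
    · rw [hJy₂, lt_min_iff]; exact ⟨by linarith, by linarith⟩
  have hJyτ : ∀ y ∈ Icc Jy₁ Jy₂, |y - t| ≤ τ := by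
    intro y hy
    rw [abs_le]
    constructor
    · have : t - τ ≤ Jy₁ := le_max_right _ _
      have := hy.1; linarith
    · have : Jy₂ ≤ t + τ := min_le_right _ _
      have := hy.2; linarith
  -- box monotonicity dichotomies
  have hψin : ∀ α ∈ Icc Jα₁ Jα₂, ∀ x ∈ Icc Jx₁ Jx₂,
      ((α, x) : ℝ × ℝ) ∈ ball ((α₀, x₀) : ℝ × ℝ) τ₁ ∩ (Ioo a b ×ˢ Icc c₁ d₁) := by
    intro α hα x hx
    constructor
    · rw [Metric.mem_ball, Prod.dist_eq]
      apply max_lt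
      · show dist α α₀ < τ₁
        rw [Real.dist_eq, abs_lt]
        constructor
        · have := hα.1; simp only [hJα₁] at this; linarith
        · have := hα.2; simp only [hJα₂] at this; linarith
      · show dist x x₀ < τ₁
        rw [Real.dist_eq]
        calc |x - x₀| ≤ τ := hJxτ x hx
          _ < τ₁ := hττ₁
    · exact ⟨hJαsub hα, hJxsub hx⟩
  have hφin : ∀ α ∈ Icc Jα₁ Jα₂, ∀ y ∈ Icc Jy₁ Jy₂,
      ((α, y) : ℝ × ℝ) ∈ ball ((α₀, t) : ℝ × ℝ) τ₂ ∩ (Ioo a b ×ˢ Icc c₂ d₂) := by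
    intro α hα y hy
    constructor
    · rw [Metric.mem_ball, Prod.dist_eq]
      apply max_lt
      · show dist α α₀ < τ₂
        rw [Real.dist_eq, abs_lt]
        constructor
        · have := hα.1; simp only [hJα₁] at this; linarith
        · have := hα.2; simp only [hJα₂] at this; linarith
      · show dist y t < τ₂
        rw [Real.dist_eq]
        calc |y - t| ≤ τ := hJyτ y hy
          _ < τ₂ := hττ₂
    · exact ⟨hJαsub hα, hJysub hy⟩
  have hMyBox : (∀ α ∈ Icc Jα₁ Jα₂, ∀ x ∈ Icc Jx₁ Jx₂,
      StrictMonoOn (fun y => H α x y) (Icc Jy₁ Jy₂)) ∨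
      (∀ α ∈ Icc Jα₁ Jα₂, ∀ x ∈ Icc Jx₁ Jx₂,
      StrictAntiOn (fun y => H α x y) (Icc Jy₁ Jy₂)) := by
    rcases lt_or_gt_of_ne hψne with hneg | hpos
    · right
      intro α hα x hx
      have := hψanti α (hJαsub hα) x (hJxsub hx)
        ((hψsign _ (hψin α hα x hx)).2 hneg)
      exact this.mono hJysub
    · left
      intro α hα x hx
      have := hψmono α (hJαsub hα) x (hJxsub hx)
        ((hψsign _ (hψin α hα x hx)).1 hpos)
      exact this.mono hJysub
  have hMxBox : (∀ α ∈ Icc Jα₁ Jα₂, ∀ y ∈ Icc Jy₁ Jy₂,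
      StrictMonoOn (fun x => H α x y) (Icc Jx₁ Jx₂)) ∨
      (∀ α ∈ Icc Jα₁ Jα₂, ∀ y ∈ Icc Jy₁ Jy₂,
      StrictAntiOn (fun x => H α x y) (Icc Jx₁ Jx₂)) := by
    rcases lt_or_gt_of_ne hφne with hneg | hpos
    · right
      intro α hα y hy
      have := hφanti α (hJαsub hα) y (hJysub hy)
        ((hφsign _ (hφin α hα y hy)).2 hneg)
      exact this.mono hJxsub
    · left
      intro α hα y hy
      have := hφmono α (hJαsub hα) y (hJysub hy)
        ((hφsign _ (hφin α hα y hy)).1 hpos)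
      exact this.mono hJxsub
  -- continuity on the box
  have hHbox : ContinuousOn (fun p : ℝ × ℝ × ℝ => H p.1 p.2.1 p.2.2)
      (Icc Jα₁ Jα₂ ×ˢ Icc Jx₁ Jx₂ ×ˢ Icc Jy₁ Jy₂) := by
    apply hCont.mono
    rintro p ⟨hp1, hp2, hp3⟩
    exact ⟨hJαsub hp1, hJxsub hp2, hJysub hp3⟩
  -- B meagreness on the small interval
  have hBbox : IsMeagre (Ioo Jy₁ Jy₂ \ B) := by
    apply hIooB.mono
    rintro z ⟨hz1, hz2⟩
    refine ⟨?_, hz2⟩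
    constructor
    · have h1 : t - s / 2 ≤ Jy₁ := le_max_left _ _
      have := hz1.1; linarith
    · have h1 : Jy₂ ≤ t + s / 2 := min_le_left _ _
      have := hz1.2; linarith
  -- A localization
  have hAxbox : A ∩ Ioo (x₀ - τ) (x₀ + τ) ⊆ Icc Jx₁ Jx₂ := by
    rintro x ⟨hxA, hxI⟩
    have hx' := hA hxA
    constructor
    · rw [hJx₁]; exact max_le hx'.1 (by have := hxI.1; linarith)
    · rw [hJx₂]; exact le_min hx'.2 (by have := hxI.2; linarith)
  -- apply the wrapper
  have key := wrap2 H Jα₁ Jα₂ Jx₁ Jx₂ Jy₁ Jy₂ α₀ x₀ t τ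
    ⟨by rw [hJα₁]; linarith, by rw [hJα₂]; linarith⟩ hJx12 hJx₀ hJy₀ hτpos
    hHbox hMyBox hMxBox A B hx₀ hAxbox hBbox
  obtain ⟨a', b', hab', hsub', hh₁, hh₂, hhlt, hprop⟩ := key
  refine ⟨a', b', hab', hsub'.trans (fun β hβ => hJαsub (Ioo_subset_Icc_self hβ)), ?_⟩
  have hIooSub : Ioo hh₁ hh₂ ⊆ ⋂ α ∈ Ioo a' b', {h : ℝ | ∃ x ∈ A, ∃ y ∈ B, H α x y = h} := by
    intro h hh
    rw [mem_iInter₂]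
    intro α hα
    exact hprop α hα h hh
  refine ⟨(hh₁ + hh₂) / 2, ?_⟩
  apply interior_maximal hIooSub isOpen_Ioo
  exact ⟨by linarith, by linarith⟩
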